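/- Let c ≥ 1, let A be an invertible c×c real matrix, and let M be an antisymmetric c×c real matrix. Define Λ = Aℤ^c and Λ* = (Aᵀ)^{−1}ℤ^c (the dual lattice). Then the lattice L = { (u + Mv + v, u + Mv − v)/√2 : u ∈ Λ, v ∈ Λ* } ⊂ ℝ^{2c} is even and self-dual with respect to the bilinear form [(x,y),(x',y')] = ⟨x,x'⟩ − ⟨y,y'⟩ of signature (c,c); i.e., [w,w] ∈ 2ℤ for all w ∈ L, and L equals its dual lattice with respect to [·,·]. -/

import Mathlib

open Matrix

private lemma sqrt2_ne : Real.sqrt 2 ≠ 0 := by positivity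

private lemma sqrt2_sq : Real.sqrt 2 * Real.sqrt 2 = 2 :=
  Real.mul_self_sqrt (by norm_num)

/-- General formula for the pairing of an arbitrary vector with a lattice vector. -/
private lemma Bform (c : ℕ) (M : Matrix (Fin c) (Fin c) ℝ) (hM : Mᵀ = -M)
    (x y u' v' : Fin c → ℝ) :
    (∑ i, x i * ((u' i + M.mulVec v' i + v' i) / Real.sqrt 2))
      - (∑ i, y i * ((u' i + M.mulVec v' i - v' i) / Real.sqrt 2))
    = (fun i => (x i - y i) / Real.sqrt 2) ⬝ᵥ u'
      + ((fun i => (x i + y i) / Real.sqrt 2)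
          - M.mulVec fun i => (x i - y i) / Real.sqrt 2) ⬝ᵥ v' := by
  have hb : (fun i => (x i - y i) / Real.sqrt 2) ⬝ᵥ M.mulVec v'
      = -(M.mulVec (fun i => (x i - y i) / Real.sqrt 2) ⬝ᵥ v') := by
    rw [dotProduct_mulVec, ← mulVec_transpose, hM, neg_mulVec, neg_dotProduct]
  have key : ∀ i : Fin c,
      x i * ((u' i + M.mulVec v' i + v' i) / Real.sqrt 2)
        - y i * ((u' i + M.mulVec v' i - v' i) / Real.sqrt 2)
      = ((x i - y i) / Real.sqrt 2) * u' i
          + ((x i - y i) / Real.sqrt 2) * M.mulVec v' i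
          + ((x i + y i) / Real.sqrt 2) * v' i := by
    intro i; field_simp; ring
  rw [← Finset.sum_sub_distrib, Finset.sum_congr rfl (fun i _ => key i),
    Finset.sum_add_distrib, Finset.sum_add_distrib]
  simp only [dotProduct, Pi.sub_apply, sub_mul, Finset.sum_sub_distrib] at *
  linarith [hb]

theorem stmt10 (c : ℕ) (hc : 1 ≤ c) (A M : Matrix (Fin c) (Fin c) ℝ)
    (hA : IsUnit A) (hM : Mᵀ = -M) :
    let Λ : Set (Fin c → ℝ) :=
      {u | ∃ z : Fin c → ℤ, u = A.mulVec (fun i => (z i : ℝ))}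
    let Λd : Set (Fin c → ℝ) :=
      {v | ∃ z : Fin c → ℤ, v = (Aᵀ)⁻¹.mulVec (fun i => (z i : ℝ))}
    let L : Set ((Fin c → ℝ) × (Fin c → ℝ)) :=
      {w | ∃ u ∈ Λ, ∃ v ∈ Λd,
        w = (fun i => (u i + M.mulVec v i + v i) / Real.sqrt 2,
             fun i => (u i + M.mulVec v i - v i) / Real.sqrt 2)}
    let B : ((Fin c → ℝ) × (Fin c → ℝ)) → ((Fin c → ℝ) × (Fin c → ℝ)) → ℝ :=
      fun w w' => (∑ i, w.1 i * w'.1 i) - (∑ i, w.2 i * w'.2 i)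
    (∀ w ∈ L, ∃ k : ℤ, B w w = 2 * k) ∧
      L = {w | ∀ w' ∈ L, ∃ k : ℤ, B w w' = k} := by
  intro Λ Λd L B
  have hAdet : IsUnit A.det := (isUnit_iff_isUnit_det A).mp hA
  have hATdet : IsUnit Aᵀ.det := by rw [det_transpose]; exact hAdet
  -- pairing of a lattice vector with a dual lattice vector is an integer
  have pairInt : ∀ z z' : Fin c → ℤ,
      (A.mulVec fun i => (z i : ℝ)) ⬝ᵥ ((Aᵀ)⁻¹.mulVec fun i => (z' i : ℝ))
        = ((∑ i, z i * z' i : ℤ) : ℝ) := by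
    intro z z'
    rw [dotProduct_mulVec, ← mulVec_transpose, transpose_nonsing_inv, transpose_transpose,
      mulVec_mulVec, nonsing_inv_mul _ hAdet, one_mulVec]
    push_cast [dotProduct]
    rfl
  have huv : ∀ u ∈ Λ, ∀ v ∈ Λd, ∃ k : ℤ, u ⬝ᵥ v = (k : ℝ) := by
    rintro u ⟨z, rfl⟩ v ⟨z', rfl⟩
    exact ⟨_, pairInt z z'⟩
  -- helpers identifying (x±y)/√2 for lattice points
  have hxy1 : ∀ u v : Fin c → ℝ,
      (fun i => ((u i + M.mulVec v i + v i) / Real.sqrt 2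
        - (u i + M.mulVec v i - v i) / Real.sqrt 2) / Real.sqrt 2) = v := by
    intro u v; funext i
    rw [div_sub_div_same, div_div]
    rw [sqrt2_sq]; ring
  have hxy2 : ∀ u v : Fin c → ℝ,
      (fun i => ((u i + M.mulVec v i + v i) / Real.sqrt 2
        + (u i + M.mulVec v i - v i) / Real.sqrt 2) / Real.sqrt 2)
        = fun i => u i + M.mulVec v i := by
    intro u v; funext i
    rw [← add_div, div_div]
    rw [sqrt2_sq]; ring
  -- the value of B on two lattice points
  have Bval : ∀ u v u' v' : Fin c → ℝ,
      (∑ i, ((u i + M.mulVec v i + v i) / Real.sqrt 2)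
          * ((u' i + M.mulVec v' i + v' i) / Real.sqrt 2))
        - (∑ i, ((u i + M.mulVec v i - v i) / Real.sqrt 2)
          * ((u' i + M.mulVec v' i - v' i) / Real.sqrt 2))
        = v ⬝ᵥ u' + u ⬝ᵥ v' := by
    intro u v u' v'
    rw [Bform c M hM _ _ u' v', hxy1 u v, hxy2 u v]
    congr 1
    congr 1
    funext i; simp
  constructor
  · rintro w ⟨u, hu, v, hv, rfl⟩
    obtain ⟨k, hk⟩ := huv u hu v hv
    refine ⟨k, ?_⟩
    show (∑ i, _) - (∑ i, _) = _
    rw [Bval u v u v, dotProduct_comm v u, hk]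
    ring
  · ext w
    constructor
    · rintro ⟨u, hu, v, hv, rfl⟩ w' ⟨u', hu', v', hv', rfl⟩
      obtain ⟨k1, hk1⟩ := huv u' hu' v hv
      obtain ⟨k2, hk2⟩ := huv u hu v' hv'
      refine ⟨k1 + k2, ?_⟩
      show (∑ i, _) - (∑ i, _) = _
      rw [Bval u v u' v', dotProduct_comm v u', hk1, hk2]
      push_cast; ring
    · intro hw
      simp only [Set.mem_setOf_eq] at hw
      set a : Fin c → ℝ := fun i => (w.1 i + w.2 i) / Real.sqrt 2 with ha
      set b : Fin c → ℝ := fun i => (w.1 i - w.2 i) / Real.sqrt 2 with hbdef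
      have hzero : (fun i => (((0 : Fin c → ℤ)) i : ℝ)) = (0 : Fin c → ℝ) := by
        funext i; simp
      have h0d : (0 : Fin c → ℝ) ∈ Λd := ⟨0, by rw [hzero, mulVec_zero]⟩
      have h0l : (0 : Fin c → ℝ) ∈ Λ := ⟨0, by rw [hzero, mulVec_zero]⟩
      have hsingle : ∀ j : Fin c, (fun i => ((Pi.single j 1 : Fin c → ℤ) i : ℝ))
          = (Pi.single j 1 : Fin c → ℝ) := by
        intro j; funext i
        by_cases h : i = j <;> simp [Pi.single_apply, h]
      -- b is in the dual lattice
      have hb : ∀ j : Fin c, ∃ k : ℤ, Aᵀ.mulVec b j = (k : ℝ) := by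
        intro j
        set u' : Fin c → ℝ := A.mulVec (fun i => ((Pi.single j 1 : Fin c → ℤ) i : ℝ)) with hu'
        have hmem : (fun i => (u' i + M.mulVec 0 i + (0 : Fin c → ℝ) i) / Real.sqrt 2,
            fun i => (u' i + M.mulVec 0 i - (0 : Fin c → ℝ) i) / Real.sqrt 2) ∈ L :=
          ⟨u', ⟨Pi.single j 1, rfl⟩, 0, h0d, rfl⟩
        obtain ⟨k, hk⟩ := hw _ hmem
        refine ⟨k, ?_⟩
        have hBw : B w (fun i => (u' i + M.mulVec 0 i + (0 : Fin c → ℝ) i) / Real.sqrt 2,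
              fun i => (u' i + M.mulVec 0 i - (0 : Fin c → ℝ) i) / Real.sqrt 2)
            = b ⬝ᵥ u'
            + ((fun i => (w.1 i + w.2 i) / Real.sqrt 2) - M.mulVec b) ⬝ᵥ (0 : Fin c → ℝ) :=
          Bform c M hM w.1 w.2 u' 0
        rw [hBw, dotProduct_zero, add_zero] at hk
        rw [← hk, hu', hsingle j, dotProduct_mulVec, ← mulVec_transpose]
        simp
      choose zb hzb using hb
      have hbmem : b ∈ Λd := by
        refine ⟨zb, ?_⟩
        have : (fun i => (zb i : ℝ)) = Aᵀ.mulVec b := funext fun j => (hzb j).symm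
        rw [this, mulVec_mulVec, nonsing_inv_mul _ hATdet, one_mulVec]
      -- a - M b is in the lattice
      have hamb : ∀ j : Fin c, ∃ k : ℤ, A⁻¹.mulVec (a - M.mulVec b) j = (k : ℝ) := by
        intro j
        set v' : Fin c → ℝ := (Aᵀ)⁻¹.mulVec (fun i => ((Pi.single j 1 : Fin c → ℤ) i : ℝ))
          with hv'
        have hmem : (fun i => ((0 : Fin c → ℝ) i + M.mulVec v' i + v' i) / Real.sqrt 2,
            fun i => ((0 : Fin c → ℝ) i + M.mulVec v' i - v' i) / Real.sqrt 2) ∈ L :=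
          ⟨0, h0l, v', ⟨Pi.single j 1, rfl⟩, rfl⟩
        obtain ⟨k, hk⟩ := hw _ hmem
        refine ⟨k, ?_⟩
        have hBw : B w (fun i => ((0 : Fin c → ℝ) i + M.mulVec v' i + v' i) / Real.sqrt 2,
              fun i => ((0 : Fin c → ℝ) i + M.mulVec v' i - v' i) / Real.sqrt 2)
            = b ⬝ᵥ (0 : Fin c → ℝ) + (a - M.mulVec b) ⬝ᵥ v' :=
          Bform c M hM w.1 w.2 0 v'
        rw [hBw, dotProduct_zero, zero_add] at hk
        rw [← hk, hv', hsingle j, dotProduct_mulVec, ← mulVec_transpose,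
          transpose_nonsing_inv, transpose_transpose]
        simp
      choose za hza using hamb
      have hamem : (a - M.mulVec b) ∈ Λ := by
        refine ⟨za, ?_⟩
        have : (fun i => (za i : ℝ)) = A⁻¹.mulVec (a - M.mulVec b) :=
          funext fun j => (hza j).symm
        rw [this, mulVec_mulVec, mul_nonsing_inv _ hAdet, one_mulVec]
      refine ⟨a - M.mulVec b, hamem, b, hbmem, ?_⟩
      apply Prod.ext
      · funext i
        simp only [Pi.sub_apply, ha, hbdef]
        rw [sub_add_cancel]
        rw [← add_div, div_div, sqrt2_sq]
        ring
      · funext i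
        simp only [Pi.sub_apply, ha, hbdef]
        rw [sub_add_cancel]
        rw [div_sub_div_same]
        have : w.1 i + w.2 i - (w.1 i - w.2 i) = 2 * w.2 i := by ring
        rw [this, div_div, sqrt2_sq]
        ring
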